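/- Component dichotomy after contraction to a core (Steiner Cut high-connectivity phase): let H be a connected multigraph with a distinguished vertex b (the core) obtained from a graph G by contracting an edge set S and identifying all heavy vertices (those onto which more than q vertices were contracted) into b. Let X₀ ⊆ E(H) be a minimum-size solution surviving the contraction such that S interrogates X₀, meaning: X₀ ∩ S = ∅; each connected component of G \ X₀ other than the unique component C₀ of more than q vertices has all its vertices contracted to a single vertex of H; and every endpoint in C₀ of an edge of X₀ is contracted onto b. Let B₁', ..., B_p' be the connected components of H \ {b} and B_i the subgraph induced by V(B_i') ∪ {b}. Then for each i, either E(B_i) ∩ X₀ = ∅ or E(B_i) ⊆ X₀. -/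

import Mathlib

variable {V W : Type*}

/-- The graph on `W` induced by a contraction map `ι : V → W` from `G`: two distinct
vertices of `W` are adjacent when some edge of `G` joins their preimages. -/
def contractedGraph (G : SimpleGraph V) (ι : V → W) : SimpleGraph W where
  Adj x y := x ≠ y ∧ ∃ u v : V, ι u = x ∧ ι v = y ∧ G.Adj u v
  symm := ⟨by
    rintro x y ⟨hxy, u, v, hu, hv, huv⟩
    exact ⟨hxy.symm, v, u, hv, hu, huv.symm⟩⟩
  loopless := ⟨fun x h => h.1 rfl⟩

/-- The graph `G` with the vertex set `X` (effectively) removed. -/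
def delV {V : Type*} (G : SimpleGraph V) (X : Set V) : SimpleGraph V where
  Adj u w := G.Adj u w ∧ u ∉ X ∧ w ∉ X
  symm := ⟨by rintro u w ⟨h, hu, hw⟩; exact ⟨h.symm, hw, hu⟩⟩
  loopless := ⟨by rintro u ⟨h, -, -⟩; exact G.loopless.irrefl u h⟩

/-- The edges of `G` that survive the contraction `ι` and lie, in the contracted
graph, inside the set `C` of vertices together with the core `b`. -/
def edgesOf (G : SimpleGraph V) (ι : V → W) (b : W) (C : Set W) : Set (Sym2 V) :=
  {e : Sym2 V | ∃ u v : V, e = s(u, v) ∧ G.Adj u v ∧ ι u ≠ ι v ∧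
    ι u ∈ insert b C ∧ ι v ∈ insert b C}

/-- Component dichotomy after contraction to a core (Steiner Cut, high connectivity
phase): let `H` be the contracted graph of `G` under `ι` with core vertex `b`, where
the minimum solution `X₀` (at most `k` edges, disjoint from the contracted set `S`,
its edges joining different components of `G \ X₀`) leaves a unique big component `C₀`
(more than `q` vertices, all others at most `q`), every small component of `G \ X₀` is
contracted to a single vertex, every endpoint in `C₀` of an edge of `X₀` is contracted
onto `b`, fibers of `ι` lie inside single components of `G \ X₀`, heavy vertices (fibers
of more than `q` vertices) are exactly `b`, and the fiber of `b` is a nonempty subset of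
`C₀`. Then for every connected component `C` of `H \ {b}`, the edge set of the block
`B = C ∪ {b}` is either disjoint from `X₀` or entirely contained in `X₀`. -/
theorem block_full_or_empty [Fintype V] [Fintype W]
    (G : SimpleGraph V) (hG : G.Connected) (q k : ℕ)
    (ι : V → W) (hsurj : Function.Surjective ι) (b : W)
    (hHconn : (contractedGraph G ι).Connected)
    (S X₀ : Set (Sym2 V))
    (hSsub : S ⊆ G.edgeSet) (hX₀sub : X₀ ⊆ G.edgeSet)
    (hX₀k : X₀.ncard ≤ k) (hdisjSX : Disjoint X₀ S)
    (C₀ : (G.deleteEdges X₀).ConnectedComponent)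
    (hbig : q < C₀.supp.ncard)
    (hsmallcard : ∀ C : (G.deleteEdges X₀).ConnectedComponent,
      C ≠ C₀ → C.supp.ncard ≤ q)
    (hsmall : ∀ C : (G.deleteEdges X₀).ConnectedComponent, C ≠ C₀ →
      ∀ u ∈ C.supp, ∀ v ∈ C.supp, ι u = ι v)
    (hcore : ∀ u v : V, s(u, v) ∈ X₀ → u ∈ C₀.supp → ι u = b)
    (hfiber : ∀ u v : V, ι u = ι v → (G.deleteEdges X₀).Reachable u v)
    (hheavy : ∀ x : W, q < (ι ⁻¹' {x}).ncard → x = b)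
    (hbfiber : (ι ⁻¹' {b}).Nonempty ∧ ι ⁻¹' {b} ⊆ C₀.supp)
    (hmin : ∀ u v : V, s(u, v) ∈ X₀ → ¬ (G.deleteEdges X₀).Reachable u v) :
    ∀ C : (delV (contractedGraph G ι) {b}).ConnectedComponent,
      edgesOf G ι b C.supp ∩ X₀ = ∅ ∨ edgesOf G ι b C.supp ⊆ X₀ := by
  intro C
  by_cases hempty : edgesOf G ι b C.supp ∩ X₀ = ∅
  · exact Or.inl hempty
  right
  obtain ⟨e₀, he₀mem, he₀X⟩ := Set.nonempty_iff_ne_empty.mpr hempty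
  obtain ⟨u₀, v₀, he₀eq, hadj₀, hne₀, hu₀m, hv₀m⟩ := he₀mem
  rw [he₀eq] at he₀X
  -- the "big" predicate: the fiber of `w` meets `C₀`
  set P : W → Prop := fun w => ∃ z, ι z = w ∧ z ∈ C₀.supp with hP
  -- P propagates along edges of H \ {b}
  have key : ∀ w₁ w₂, (delV (contractedGraph G ι) {b}).Adj w₁ w₂ → P w₁ → P w₂ := by
    rintro w₁ w₂ ⟨⟨hne, u, v, hu, hv, huv⟩, h1b, h2b⟩ ⟨z, hz, hzC⟩
    have hzu : (G.deleteEdges X₀).Reachable z u := hfiber z u (by rw [hz, hu])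
    have huC : u ∈ C₀.supp := by
      rw [SimpleGraph.ConnectedComponent.mem_supp_iff] at hzC ⊢
      rw [← hzC]
      exact SimpleGraph.ConnectedComponent.eq.mpr hzu.symm
    by_cases hX : s(u, v) ∈ X₀
    · exact absurd (hu ▸ hcore u v hX huC) (by simpa using h1b)
    · have hadj' : (G.deleteEdges X₀).Adj u v := by
        rw [SimpleGraph.deleteEdges_adj]; exact ⟨huv, hX⟩
      have hvC : v ∈ C₀.supp := by
        rw [SimpleGraph.ConnectedComponent.mem_supp_iff] at huC ⊢
        rw [← huC]
        exact SimpleGraph.ConnectedComponent.eq.mpr hadj'.reachable.symm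
      exact ⟨v, hv, hvC⟩
  -- P is constant along walks in H \ {b}
  have prop : ∀ (a c : W), (delV (contractedGraph G ι) {b}).Walk a c → P a → P c := by
    intro a c p
    induction p with
    | nil => exact id
    | cons h _ ih => exact fun ha => ih (key _ _ h ha)
  -- from the X₀-edge e₀: a vertex w₀ of C with fiber avoiding C₀
  have hgetsmall : ∃ w₀ ∈ C.supp, ∃ z₀, ι z₀ = w₀ ∧ z₀ ∉ C₀.supp := by
    by_cases hu₀C : u₀ ∈ C₀.supp
    · have hb₀ : ι u₀ = b := hcore u₀ v₀ he₀X hu₀C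
      have hv₀C : v₀ ∉ C₀.supp := by
        intro hv₀C
        exact hne₀ (by rw [hb₀, hcore v₀ u₀ (by rwa [Sym2.eq_swap]) hv₀C])
      have hv₀b : ι v₀ ≠ b := fun h => hv₀C (hbfiber.2 (by simpa using h))
      refine ⟨ι v₀, ?_, v₀, rfl, hv₀C⟩
      rcases Set.mem_insert_iff.mp hv₀m with h | h
      · exact absurd h hv₀b
      · exact h
    · have hu₀b : ι u₀ ≠ b := fun h => hu₀C (hbfiber.2 (by simpa using h))
      refine ⟨ι u₀, ?_, u₀, rfl, hu₀C⟩
      rcases Set.mem_insert_iff.mp hu₀m with h | h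
      · exact absurd h hu₀b
      · exact h
  obtain ⟨w₀, hw₀C, z₀, hz₀, hz₀C⟩ := hgetsmall
  have hnPw₀ : ¬ P w₀ := by
    rintro ⟨z, hz, hzC⟩
    have := hfiber z z₀ (by rw [hz, hz₀])
    rw [SimpleGraph.ConnectedComponent.mem_supp_iff] at hzC
    exact hz₀C (by
      rw [SimpleGraph.ConnectedComponent.mem_supp_iff, ← hzC]
      exact SimpleGraph.ConnectedComponent.eq.mpr this.symm)
  -- now show every block edge is in X₀
  intro e he
  by_contra heX
  obtain ⟨u, v, heq, hadj, hne, hum, hvm⟩ := he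
  rw [heq] at heX
  have hadj' : (G.deleteEdges X₀).Adj u v := by
    rw [SimpleGraph.deleteEdges_adj]; exact ⟨hadj, heX⟩
  -- u and v lie in C₀
  have huC : u ∈ C₀.supp := by
    by_contra huC
    rw [SimpleGraph.ConnectedComponent.mem_supp_iff] at huC
    refine hne (hsmall _ huC u rfl v ?_)
    rw [SimpleGraph.ConnectedComponent.mem_supp_iff]
    exact SimpleGraph.ConnectedComponent.eq.mpr hadj'.reachable.symm
  have hvC : v ∈ C₀.supp := by
    rw [SimpleGraph.ConnectedComponent.mem_supp_iff] at huC ⊢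
    rw [← huC]
    exact SimpleGraph.ConnectedComponent.eq.mpr hadj'.reachable.symm
  -- produce a vertex x ∈ C.supp with P x
  have hgetbig : ∃ x ∈ C.supp, P x := by
    by_cases hub : ι u = b
    · have hvb : ι v ≠ b := fun h => hne (by rw [hub, h])
      refine ⟨ι v, ?_, v, rfl, hvC⟩
      rcases Set.mem_insert_iff.mp hvm with h | h
      · exact absurd h hvb
      · exact h
    · refine ⟨ι u, ?_, u, rfl, huC⟩
      rcases Set.mem_insert_iff.mp hum with h | h
      · exact absurd h hub
      · exact h
  obtain ⟨x, hxC, hPx⟩ := hgetbig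
  -- x and w₀ are in the same component of H \ {b}, contradiction
  have hreach : (delV (contractedGraph G ι) {b}).Reachable x w₀ := by
    rw [SimpleGraph.ConnectedComponent.mem_supp_iff] at hxC hw₀C
    exact SimpleGraph.ConnectedComponent.exact (hxC.trans hw₀C.symm)
  obtain ⟨p⟩ := hreach
  exact hnPw₀ (prop x w₀ p hPx)
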